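/- Let ν ∈ (0,1), μ = 1 − ν, δ ∈ ℝ, α > 0, and let (C_N) be a sequence of integers with C_N = νN + δ√N + o(√N). Then lim_{N→∞} N^{α/2} · [∫₀¹ (1−u)^N u^{α−1} du] / [∫₀¹ (1−u)^{N−C_N} (1 + (μ/ν)u)^{C_N} u^{α−1} du] = Γ(α) / ∫₀^∞ exp(δu/ν − (1−ν)u²/(2ν)) u^{α−1} du. -/

import Mathlib

open Filter Topology MeasureTheory Asymptotics

open Set in

lemma A_eq (α : ℝ) (hα : 0 < α) (N : ℕ) :
    (∫ u in Set.Ioo (0:ℝ) 1, (1 - u) ^ N * u ^ (α - 1))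
      = (Nat.factorial N : ℝ) / ∏ j ∈ Finset.range (N + 1), (α + j) := by
  have h1 : Complex.betaIntegral α (N + 1) = ((∫ u in Set.Ioo (0:ℝ) 1, (1 - u) ^ N * u ^ (α - 1) : ℝ) : ℂ) := by
    have h2 : (∫ u in Set.Ioo (0:ℝ) 1, (1 - u) ^ N * u ^ (α - 1))
        = ∫ u in (0:ℝ)..1, (1 - u) ^ N * u ^ (α - 1) := by
      rw [intervalIntegral.integral_of_le zero_le_one, MeasureTheory.integral_Ioc_eq_integral_Ioo]
    rw [h2, Complex.betaIntegral, ← intervalIntegral.integral_ofReal]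
    apply intervalIntegral.integral_congr_ae
    filter_upwards with x hx
    rw [Set.uIoc_of_le (zero_le_one (α := ℝ))] at hx
    have hx0 : (0:ℝ) ≤ x := hx.1.le
    rw [show ((N:ℂ) + 1 - 1) = ((N:ℕ):ℂ) by ring, Complex.cpow_natCast]
    rw [show ((α:ℂ) - 1) = ((α - 1 : ℝ):ℂ) by push_cast; ring]
    rw [← Complex.ofReal_cpow hx0]
    push_cast
    ring
  have h3 : Complex.betaIntegral α (N + 1) = (Nat.factorial N : ℂ) / ∏ j ∈ Finset.range (N + 1), ((α:ℂ) + j) := by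
    have := Complex.betaIntegral_eval_nat_add_one_right (u := (α:ℂ)) (by simpa using hα) N
    simpa using this
  have h4 : ((Nat.factorial N : ℝ) / ∏ j ∈ Finset.range (N + 1), (α + j) : ℝ) =
      ((Nat.factorial N : ℂ) / ∏ j ∈ Finset.range (N + 1), ((α:ℂ) + j)) := by
    push_cast
    rfl
  exact_mod_cast h1.symm.trans (h3.trans h4.symm)
section Aux
open Set

lemma log_one_add_taylor {x : ℝ} (hx : |x| ≤ 1/2) :
    |Real.log (1 + x) - x + x^2/2| ≤ 2 * |x|^3 := by
  have h1 : |(-x)| < 1 := by rw [abs_neg]; linarith [abs_nonneg x]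
  have := Real.abs_log_sub_add_sum_range_le h1 2
  have hsum : ∑ i ∈ Finset.range 2, (-x)^(i+1)/((i:ℝ)+1) = -x + x^2/2 := by
    simp [Finset.sum_range_succ]; ring
  rw [hsum] at this
  have h2 : (1 - (-x):ℝ) = 1 + x := by ring
  rw [h2, abs_neg] at this
  have h3 : |Real.log (1+x) - x + x^2/2| = |(-x + x^2/2) + Real.log (1+x)| := by
    congr 1; ring
  rw [h3]
  refine this.trans ?_
  have h4 : 1 - |x| ≥ 1/2 := by linarith
  have h5 : |x|^(2+1)/(1-|x|) ≤ |x|^3/(1/2) := by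
    apply div_le_div_of_nonneg_left (by positivity) (by norm_num) h4
  calc |x|^(2+1)/(1-|x|) ≤ |x|^3/(1/2) := h5
    _ = 2*|x|^3 := by ring

lemma sqrt_tendsto_atTop : Tendsto (fun N : ℕ => Real.sqrt N) atTop atTop := by
  have h := (tendsto_rpow_atTop (y := (1:ℝ)/2) (by norm_num)).comp
    (tendsto_natCast_atTop_atTop (R := ℝ))
  refine h.congr fun N => ?_
  simp [Function.comp, Real.sqrt_eq_rpow]

lemma key_tendsto (ν δ t : ℝ) (hν0 : 0 < ν) (hν1 : ν < 1) (ht : 0 < t)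
    (a : ℕ → ℝ) (ha : Tendsto (fun N => (a N - ν*N)/Real.sqrt N) atTop (𝓝 δ)) :
    Tendsto (fun N : ℕ => ((N:ℝ) - a N) * Real.log (1 - t/Real.sqrt N)
        + a N * Real.log (1 + ((1-ν)/ν)*(t/Real.sqrt N))) atTop
      (𝓝 (δ*t/ν - (1-ν)*t^2/(2*ν))) := by
  set c : ℝ := (1-ν)/ν with hc
  set s : ℕ → ℝ := fun N => t / Real.sqrt N with hs
  set d : ℕ → ℝ := fun N => (a N - ν * N)/Real.sqrt N with hd
  have hc0 : 0 < c := div_pos (by linarith) hν0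
  have hs0 : Tendsto s atTop (𝓝 0) :=
    Tendsto.div_atTop tendsto_const_nhds sqrt_tendsto_atTop
  have hsinv : Tendsto (fun N : ℕ => (Real.sqrt N)⁻¹) atTop (𝓝 0) :=
    sqrt_tendsto_atTop.inv_tendsto_atTop
  -- a N / N tends to ν
  have hr : Tendsto (fun N : ℕ => a N / N) atTop (𝓝 ν) := by
    have h1 : Tendsto (fun N : ℕ => d N * (Real.sqrt N)⁻¹ + ν) atTop (𝓝 (δ * 0 + ν)) :=
      (ha.mul hsinv).add tendsto_const_nhds
    rw [mul_zero, zero_add] at h1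
    refine h1.congr' ?_
    filter_upwards [eventually_ge_atTop 1] with N hN
    have hN0 : (0:ℝ) < N := by exact_mod_cast hN
    have hsq : (0:ℝ) < Real.sqrt N := Real.sqrt_pos.mpr hN0
    have hmul : Real.sqrt N * Real.sqrt N = (N:ℝ) := Real.mul_self_sqrt hN0.le
    simp only [hd]
    field_simp
    rw [Real.sq_sqrt hN0.le]; ring
  -- eventual smallness of s
  have hsmall : ∀ᶠ N : ℕ in atTop, |s N| ≤ 1/2 ∧ |c * s N| ≤ 1/2 ∧ 0 < s N ∧ (1:ℕ) ≤ N
      ∧ |a N| ≤ 2 * N := by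
    have e1 := hs0.eventually (eventually_abs_sub_lt 0 (by norm_num : (0:ℝ) < 1/2))
    have e2' := hs0.const_mul c
    rw [mul_zero] at e2'
    have e2 := e2'.eventually (eventually_abs_sub_lt 0 (by norm_num : (0:ℝ) < 1/2))
    have e3 : ∀ᶠ N : ℕ in atTop, 0 < s N := by
      filter_upwards [eventually_ge_atTop 1] with N hN
      have hN0 : (0:ℝ) < N := by exact_mod_cast hN
      exact div_pos ht (Real.sqrt_pos.mpr hN0)
    have e4 : ∀ᶠ N : ℕ in atTop, |a N| ≤ 2 * N := by
      have := hr.eventually (eventually_abs_sub_lt ν (by linarith : (0:ℝ) < 1))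
      filter_upwards [this, eventually_ge_atTop 1] with N h1 h2
      have hN0 : (0:ℝ) < N := by exact_mod_cast h2
      have h6 : |a N / N| ≤ |ν| + 1 := by
        have h7 := abs_sub_abs_le_abs_sub (a N / N) ν
        linarith
      rw [abs_div, abs_of_pos hN0, div_le_iff₀ hN0] at h6
      have hν2 : |ν| + 1 ≤ 2 := by rw [abs_of_pos hν0]; linarith
      nlinarith
    filter_upwards [e1, e2, e3, e4, eventually_ge_atTop 1] with N h1 h2 h3 h4 h5
    rw [sub_zero] at h1 h2
    exact ⟨h1.le, h2.le, h3, h5, h4⟩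
  -- remainder terms
  set R1 : ℕ → ℝ := fun N => Real.log (1 - s N) + s N + (s N)^2/2 with hR1
  set R2 : ℕ → ℝ := fun N => Real.log (1 + c * s N) - c * s N + (c * s N)^2/2 with hR2
  have hsN3 : Tendsto (fun N : ℕ => (N:ℝ) * (s N)^3) atTop (𝓝 0) := by
    have h0 : Tendsto (fun N : ℕ => t^3 * (Real.sqrt N)⁻¹) atTop (𝓝 (t^3 * 0)) :=
      hsinv.const_mul _
    rw [mul_zero] at h0
    refine h0.congr' ?_
    filter_upwards [eventually_ge_atTop 1] with N hN
    have hN0 : (0:ℝ) < N := by exact_mod_cast hN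
    have hsq : (0:ℝ) < Real.sqrt N := Real.sqrt_pos.mpr hN0
    have hmul : Real.sqrt N * Real.sqrt N = (N:ℝ) := Real.mul_self_sqrt hN0.le
    have h3 : (Real.sqrt N)^3 = N * Real.sqrt N := by
      rw [pow_succ, sq, hmul]
    simp only [hs, div_pow, h3]
    field_simp
  have hT3 : Tendsto (fun N : ℕ => ((N:ℝ) - a N) * R1 N) atTop (𝓝 0) := by
    apply squeeze_zero_norm' (a := fun N : ℕ => 6 * ((N:ℝ) * (s N)^3))
    · filter_upwards [hsmall] with N ⟨h1, h2, h3, h4, h5⟩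
      have hbR1 : |R1 N| ≤ 2 * |s N|^3 := by
        have hb := log_one_add_taylor (x := -(s N)) (by rwa [abs_neg])
        have heq : Real.log (1 + -(s N)) - (-(s N)) + (-(s N))^2/2 = R1 N := by
          rw [show (1 + -(s N)) = 1 - s N by ring]; simp only [hR1]; ring
        rw [heq, abs_neg] at hb
        exact hb
      have hN0 : (0:ℝ) < N := by exact_mod_cast h4
      calc ‖((N:ℝ) - a N) * R1 N‖ = |(N:ℝ) - a N| * |R1 N| := abs_mul _ _
        _ ≤ (3 * N) * (2 * |s N|^3) := by
            apply mul_le_mul _ hbR1 (abs_nonneg _) (by positivity)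
            calc |(N:ℝ) - a N| ≤ |(N:ℝ)| + |a N| := abs_sub _ _
              _ ≤ N + 2*N := by rw [abs_of_pos hN0]; linarith
              _ = 3 * N := by ring
        _ = 6 * ((N:ℝ) * |s N|^3) := by ring
        _ = 6 * ((N:ℝ) * (s N)^3) := by rw [abs_of_pos h3]
    · have h6 := hsN3.const_mul (6:ℝ)
      rwa [mul_zero] at h6
  have hT4 : Tendsto (fun N : ℕ => a N * R2 N) atTop (𝓝 0) := by
    apply squeeze_zero_norm' (a := fun N : ℕ => (4 * c^3) * ((N:ℝ) * (s N)^3))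
    · filter_upwards [hsmall] with N ⟨h1, h2, h3, h4, h5⟩
      have hbR2 : |R2 N| ≤ 2 * c^3 * |s N|^3 := by
        have hb := log_one_add_taylor (x := c * s N) h2
        have heq : Real.log (1 + c * s N) - (c * s N) + (c * s N)^2/2 = R2 N := by
          simp only [hR2]
        rw [heq] at hb
        refine hb.trans ?_
        rw [abs_mul, abs_of_pos hc0]
        calc 2 * (c * |s N|)^3 = 2 * c^3 * |s N|^3 := by ring
          _ ≤ 2 * c^3 * |s N|^3 := le_refl _
      have hN0 : (0:ℝ) < N := by exact_mod_cast h4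
      calc ‖a N * R2 N‖ = |a N| * |R2 N| := abs_mul _ _
        _ ≤ (2 * N) * (2 * c^3 * |s N|^3) :=
            mul_le_mul h5 hbR2 (abs_nonneg _) (by positivity)
        _ = (4 * c^3) * ((N:ℝ) * |s N|^3) := by ring
        _ = (4 * c^3) * ((N:ℝ) * (s N)^3) := by rw [abs_of_pos h3]
    · have h6 := hsN3.const_mul (4 * c^3)
      rwa [mul_zero] at h6
  have hT1 : Tendsto (fun N : ℕ => (t/ν) * d N) atTop (𝓝 ((t/ν) * δ)) := ha.const_mul _
  have hT2 : Tendsto (fun N : ℕ => -(t^2/2) * (1 - (1-c^2) * (a N / N))) atTop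
      (𝓝 (-(t^2/2) * (1 - (1-c^2) * ν))) :=
    ((hr.const_mul (1-c^2)).const_sub 1).const_mul _
  have hsum := ((hT1.add hT2).add hT3).add hT4
  have hlimeq : (((t/ν) * δ + -(t^2/2) * (1 - (1-c^2) * ν)) + 0) + 0
      = δ*t/ν - (1-ν)*t^2/(2*ν) := by
    simp only [add_zero, hc]
    field_simp
    ring
  rw [hlimeq] at hsum
  refine hsum.congr' ?_
  filter_upwards [hsmall] with N ⟨h1, h2, h3, h4, h5⟩
  have hN0 : (0:ℝ) < N := by exact_mod_cast h4
  have hsq : (0:ℝ) < Real.sqrt N := Real.sqrt_pos.mpr hN0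
  have hmul : Real.sqrt N * Real.sqrt N = (N:ℝ) := Real.mul_self_sqrt hN0.le
  have hlog1 : Real.log (1 - s N) = -(s N) - (s N)^2/2 + R1 N := by
    simp only [hR1]; ring
  have hlog2 : Real.log (1 + c * s N) = c * s N - (c * s N)^2/2 + R2 N := by
    simp only [hR2]; ring
  have k1 : t * d N = s N * (a N - ν * (N:ℝ)) := by
    simp only [hd, hs]; ring
  have k2 : t^2 = (s N)^2 * (N:ℝ) := by
    simp only [hs, div_pow, Real.sq_sqrt hN0.le]
    rw [div_mul_cancel₀ _ hN0.ne']
  have k3 : a N / (N:ℝ) * (N:ℝ) = a N := div_mul_cancel₀ _ hN0.ne'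
  have k4 : ν * (1 + c) = 1 := by rw [hc]; field_simp <;> ring
  show (t/ν) * d N + -(t^2/2) * (1 - (1-c^2) * (a N / N)) + ((N:ℝ) - a N) * R1 N + a N * R2 N
      = ((N:ℝ) - a N) * Real.log (1 - s N) + a N * Real.log (1 + c * s N)
  rw [hlog1, hlog2]
  have k5 : ν * ν⁻¹ = 1 := mul_inv_cancel₀ hν0.ne'
  linear_combination (1/ν) * k1 + (-(1/2) + (1-c^2)*(a N/(N:ℝ))/2) * k2
    + ((s N)^2/2*(1-c^2)) * k3 + (-(a N * s N/ν)) * k4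
    + (t * (Real.sqrt N)⁻¹ * (-(a N)*(ν*ν⁻¹ - 1) + a N * ν⁻¹ - (N:ℝ))) * k5

lemma contOn_rpow (α : ℝ) : ContinuousOn (fun t : ℝ => t^(α-1)) (Set.Ioi 0) :=
  continuousOn_id.rpow_const (fun x hx => Or.inl (ne_of_gt hx))

lemma integrable_G {A B α : ℝ} (hB : 0 < B) (hα : 0 < α) :
    IntegrableOn (fun t : ℝ => Real.exp (A*t - B*t^2) * t^(α-1)) (Set.Ioi (0:ℝ)) := by
  have hmeas : AEStronglyMeasurable (fun t : ℝ => Real.exp (A*t - B*t^2) * t^(α-1))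
      (volume.restrict (Set.Ioi (0:ℝ))) := by
    apply ContinuousOn.aestronglyMeasurable _ measurableSet_Ioi
    exact ((Real.continuous_exp.comp (by continuity)).continuousOn).mul (contOn_rpow α)
  have hbase := Real.GammaIntegral_convergent hα
  refine Integrable.mono' (hbase.const_mul (Real.exp ((A+1)^2/(4*B)))) hmeas ?_
  filter_upwards [ae_restrict_mem measurableSet_Ioi] with t ht
  have ht0 : (0:ℝ) < t := ht
  have h4 : (A+1)^2/(4*B)*(4*B) = (A+1)^2 := div_mul_cancel₀ _ (by positivity)
  have h1 : A*t - B*t^2 ≤ (A+1)^2/(4*B) + -t := by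
    nlinarith [sq_nonneg (2*B*t - (A+1)), h4, hB]
  have h2 : Real.exp (A*t - B*t^2) ≤ Real.exp ((A+1)^2/(4*B)) * Real.exp (-t) := by
    rw [← Real.exp_add]; exact Real.exp_le_exp.mpr h1
  have h3 : (0:ℝ) ≤ t^(α-1) := Real.rpow_nonneg ht0.le _
  have hnorm : ‖Real.exp (A*t - B*t^2) * t^(α-1)‖ = Real.exp (A*t - B*t^2) * t^(α-1) := by
    rw [Real.norm_eq_abs, abs_of_nonneg (by positivity)]
  rw [hnorm]
  calc Real.exp (A*t - B*t^2) * t^(α-1)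
      ≤ (Real.exp ((A+1)^2/(4*B)) * Real.exp (-t)) * t^(α-1) :=
        mul_le_mul_of_nonneg_right h2 h3
    _ = Real.exp ((A+1)^2/(4*B)) * (Real.exp (-t) * t^(α-1)) := by ring

lemma sub_lemma (n1 n2 : ℕ) (c α b : ℝ) (hb : 0 < b) :
    ∫ u in Set.Ioo (0:ℝ) 1, (1-u)^n1 * (1+c*u)^n2 * u^(α-1)
      = b⁻¹ * ((b⁻¹)^(α-1) * ∫ t in Set.Ioi (0:ℝ),
          Set.indicator (Set.Ioo (0:ℝ) b)
            (fun t => (1-t/b)^n1 * (1+c*(t/b))^n2 * t^(α-1)) t) := by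
  set h : ℝ → ℝ := fun u => (1-u)^n1 * (1+c*u)^n2 * u^(α-1) with hh
  set g : ℝ → ℝ := Set.indicator (Set.Ioo (0:ℝ) 1) h with hg
  have stepA : ∫ u in Set.Ioo (0:ℝ) 1, h u = ∫ t in Set.Ioi (0:ℝ), g t := by
    rw [hg, integral_indicator measurableSet_Ioo,
      Measure.restrict_restrict measurableSet_Ioo]
    congr 1
    rw [Set.inter_eq_left.mpr (fun x hx => hx.1)]
  have stepB : (∫ x in Set.Ioi (0:ℝ), g (b⁻¹ * x)) = b • ∫ x in Set.Ioi (0:ℝ), g x := by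
    have := MeasureTheory.integral_comp_mul_left_Ioi g 0 (inv_pos.mpr hb)
    rw [mul_zero, inv_inv] at this
    exact this
  have stepC : ∀ x : ℝ, g (b⁻¹ * x)
      = Set.indicator (Set.Ioo (0:ℝ) b) (fun t => h (b⁻¹ * t)) x := by
    intro x
    rw [hg]
    by_cases hx : x ∈ Set.Ioo (0:ℝ) b
    · rw [Set.indicator_of_mem hx, Set.indicator_of_mem]
      exact ⟨mul_pos (inv_pos.mpr hb) hx.1, by rw [inv_mul_eq_div, div_lt_one hb]; exact hx.2⟩
    · rw [Set.indicator_of_notMem hx, Set.indicator_of_notMem]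
      intro hmem
      apply hx
      obtain ⟨h1, h2⟩ := hmem
      constructor
      · nlinarith [inv_pos.mpr hb]
      · rw [inv_mul_eq_div, div_lt_one hb] at h2; exact h2
  have stepD : ∀ x : ℝ, Set.indicator (Set.Ioo (0:ℝ) b) (fun t => h (b⁻¹ * t)) x
      = (b⁻¹)^(α-1) * Set.indicator (Set.Ioo (0:ℝ) b)
          (fun t => (1-t/b)^n1 * (1+c*(t/b))^n2 * t^(α-1)) x := by
    intro x
    rw [← Set.indicator_const_mul]
    refine congrFun (Set.indicator_congr fun t ht => ?_) x
    simp only [hh, inv_mul_eq_div]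
    have ht0 : (0:ℝ) < t := ht.1
    rw [Real.div_rpow ht0.le hb.le, div_eq_mul_inv (t^(α-1)), ← Real.inv_rpow hb.le]
    ring
  calc ∫ u in Set.Ioo (0:ℝ) 1, h u = ∫ t in Set.Ioi (0:ℝ), g t := stepA
    _ = b⁻¹ * ∫ x in Set.Ioi (0:ℝ), g (b⁻¹ * x) := by
        rw [stepB, smul_eq_mul, ← mul_assoc, inv_mul_cancel₀ hb.ne', one_mul]
    _ = b⁻¹ * ∫ x in Set.Ioi (0:ℝ), (b⁻¹)^(α-1) * Set.indicator (Set.Ioo (0:ℝ) b)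
          (fun t => (1-t/b)^n1 * (1+c*(t/b))^n2 * t^(α-1)) x := by
        congr 1
        apply integral_congr_ae
        filter_upwards with x
        rw [stepC, stepD]
    _ = b⁻¹ * ((b⁻¹)^(α-1) * ∫ t in Set.Ioi (0:ℝ),
          Set.indicator (Set.Ioo (0:ℝ) b)
            (fun t => (1-t/b)^n1 * (1+c*(t/b))^n2 * t^(α-1)) t) := by
        rw [integral_const_mul]

lemma log_one_sub_le {s : ℝ} (h0 : 0 ≤ s) (h1 : s < 1) :
    Real.log (1 - s) ≤ -s - s^2/2 := by
  have habs : |s| < 1 := by rw [abs_of_nonneg h0]; exact h1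
  have hs := Real.hasSum_pow_div_log_of_abs_lt_one habs
  have hle : ∑ n ∈ Finset.range 2, s^(n+1)/((n:ℝ)+1) ≤ -Real.log (1 - s) :=
    sum_le_hasSum _ (fun i _ => by positivity) hs
  have heq : ∑ n ∈ Finset.range 2, s^(n+1)/((n:ℝ)+1) = s + s^2/2 := by
    simp [Finset.sum_range_succ]; norm_num
  rw [heq] at hle
  linarith

lemma sqrt_tendsto_atTop' : Tendsto (fun N : ℕ => Real.sqrt N) atTop atTop := by
  have h := (tendsto_rpow_atTop (y := (1:ℝ)/2) (by norm_num)).comp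
    (tendsto_natCast_atTop_atTop (R := ℝ))
  refine h.congr fun N => ?_
  simp [Function.comp, Real.sqrt_eq_rpow]

lemma ratio_tendsto (ν δ : ℝ) (a : ℕ → ℝ)
    (ha : Tendsto (fun N : ℕ => (a N - ν*N)/Real.sqrt N) atTop (𝓝 δ)) :
    Tendsto (fun N : ℕ => a N / N) atTop (𝓝 ν) := by
  have hsinv : Tendsto (fun N : ℕ => (Real.sqrt N)⁻¹) atTop (𝓝 0) :=
    sqrt_tendsto_atTop'.inv_tendsto_atTop
  have h1 : Tendsto (fun N : ℕ => ((a N - ν*N)/Real.sqrt N) * (Real.sqrt N)⁻¹ + ν) atTop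
      (𝓝 (δ * 0 + ν)) := (ha.mul hsinv).add tendsto_const_nhds
  rw [mul_zero, zero_add] at h1
  refine h1.congr' ?_
  filter_upwards [eventually_ge_atTop 1] with N hN
  have hN0 : (0:ℝ) < N := by exact_mod_cast hN
  have hsq : (0:ℝ) < Real.sqrt N := Real.sqrt_pos.mpr hN0
  have hmul : Real.sqrt N * Real.sqrt N = (N:ℝ) := Real.mul_self_sqrt hN0.le
  field_simp
  rw [Real.sq_sqrt hN0.le]; ring

lemma partB (ν δ α : ℝ) (hν0 : 0 < ν) (hν1 : ν < 1) (hα : 0 < α) (C : ℕ → ℕ)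
    (hd : Tendsto (fun N : ℕ => ((C N : ℝ) - ν*N)/Real.sqrt N) atTop (𝓝 δ)) :
    Tendsto (fun N : ℕ => (N:ℝ)^(α/2) * ∫ u in Set.Ioo (0:ℝ) 1,
        (1-u)^(N - C N) * (1 + ((1-ν)/ν)*u)^(C N) * u^(α-1)) atTop
      (𝓝 (∫ u in Set.Ioi (0:ℝ), Real.exp (δ*u/ν - (1-ν)*u^2/(2*ν)) * u^(α-1))) := by
  set c : ℝ := (1-ν)/ν with hc
  have hc0 : 0 < c := div_pos (by linarith) hν0
  have hcinv : ν * (1 + c) = 1 := by rw [hc]; field_simp <;> ring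
  set F : ℕ → ℝ → ℝ := fun N => Set.indicator (Set.Ioo (0:ℝ) (Real.sqrt N))
      (fun t => (1-t/Real.sqrt N)^(N - C N) * (1+c*(t/Real.sqrt N))^(C N) * t^(α-1)) with hF
  set f : ℝ → ℝ := fun t => Real.exp (δ*t/ν - (1-ν)*t^2/(2*ν)) * t^(α-1) with hf
  set G : ℝ → ℝ := fun t => Real.exp (((|δ|+1)/ν)*t - ((1-ν)/4)*t^2) * t^(α-1) with hG
  -- eventual bounds
  have hb1 : ∀ᶠ N : ℕ in atTop, (C N : ℝ) - ν*N ≤ (|δ|+1) * Real.sqrt N := by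
    have h0 : ∀ᶠ N : ℕ in atTop, ((C N : ℝ) - ν*N)/Real.sqrt N < |δ|+1 :=
      hd.eventually_lt_const (by linarith [le_abs_self δ])
    filter_upwards [h0, eventually_ge_atTop 1] with N h1 h2
    have hN0 : (0:ℝ) < N := by exact_mod_cast h2
    have hsq : (0:ℝ) < Real.sqrt N := Real.sqrt_pos.mpr hN0
    rw [div_lt_iff₀ hsq] at h1
    linarith
  have hratio : Tendsto (fun N : ℕ => (C N : ℝ) / N) atTop (𝓝 ν) := ratio_tendsto ν δ _ hd
  have hb2 : ∀ᶠ N : ℕ in atTop, (C N : ℝ) ≤ (1 - (1-ν)/2) * N ∧ C N ≤ N := by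
    have h0 : ∀ᶠ N : ℕ in atTop, (C N : ℝ)/N < 1 - (1-ν)/2 :=
      hratio.eventually_lt_const (by linarith)
    filter_upwards [h0, eventually_ge_atTop 1] with N h1 h2
    have hN0 : (0:ℝ) < N := by exact_mod_cast h2
    rw [div_lt_iff₀ hN0] at h1
    constructor
    · linarith
    · have : (C N : ℝ) ≤ N := by nlinarith
      exact_mod_cast this
  -- measurability
  have hF_meas : ∀ N : ℕ, AEStronglyMeasurable (F N) (volume.restrict (Set.Ioi (0:ℝ))) := by
    intro N
    apply AEStronglyMeasurable.indicator _ measurableSet_Ioo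
    apply ContinuousOn.aestronglyMeasurable _ measurableSet_Ioi
    exact (((continuous_const.sub (continuous_id.div_const _)).pow _).mul
      ((continuous_const.add (continuous_const.mul (continuous_id.div_const _))).pow _)).continuousOn.mul
      (contOn_rpow α)
  -- domination
  have h_bound : ∀ᶠ N : ℕ in atTop, ∀ᵐ t ∂(volume.restrict (Set.Ioi (0:ℝ))),
      ‖F N t‖ ≤ G t := by
    filter_upwards [hb1, hb2, eventually_ge_atTop 1] with N h1 ⟨h2, h2'⟩ h3
    filter_upwards [ae_restrict_mem measurableSet_Ioi] with t ht
    have ht0 : (0:ℝ) < t := ht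
    have hGpos : 0 < G t := by
      rw [hG]
      positivity
    by_cases hmem : t ∈ Set.Ioo (0:ℝ) (Real.sqrt N)
    case neg =>
      rw [hF]
      simp only [Set.indicator_of_notMem hmem]
      simpa using hGpos.le
    case pos =>
      have hN0 : (0:ℝ) < N := by exact_mod_cast h3
      have hsq : (0:ℝ) < Real.sqrt N := Real.sqrt_pos.mpr hN0
      set s : ℝ := t / Real.sqrt N with hs
      have hs0 : 0 < s := div_pos ht0 hsq
      have hs1 : s < 1 := (div_lt_one hsq).mpr hmem.2
      have k1 : s * Real.sqrt N = t := div_mul_cancel₀ _ hsq.ne'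
      have k2 : s^2 * N = t^2 := by
        rw [hs, div_pow, Real.sq_sqrt hN0.le, div_mul_cancel₀ _ hN0.ne']
      have hn1 : ((N - C N : ℕ) : ℝ) = (N:ℝ) - C N := by
        rw [Nat.cast_sub h2']
      -- pointwise value
      rw [hF]
      simp only [Set.indicator_of_mem hmem]
      have hval : (0:ℝ) ≤ (1-s)^(N - C N) * (1+c*s)^(C N) * t^(α-1) := by
        have : (0:ℝ) ≤ 1 - s := by linarith
        positivity
      rw [Real.norm_eq_abs, abs_of_nonneg hval]
      -- exponential bounds
      have e1 : (1-s)^(N - C N) ≤ Real.exp (((N:ℝ) - C N) * (-s - s^2/2)) := by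
        have hbase : (1-s) ≤ Real.exp (-s - s^2/2) := by
          rw [← Real.exp_log (by linarith : (0:ℝ) < 1 - s)]
          exact Real.exp_le_exp.mpr (log_one_sub_le hs0.le hs1)
        calc (1-s)^(N - C N) ≤ (Real.exp (-s - s^2/2))^(N - C N) :=
              pow_le_pow_left₀ (by linarith) hbase _
          _ = Real.exp (((N - C N : ℕ):ℝ) * (-s - s^2/2)) := by
              rw [← Real.exp_nat_mul]
          _ = Real.exp (((N:ℝ) - C N) * (-s - s^2/2)) := by rw [hn1]
      have e2 : (1+c*s)^(C N) ≤ Real.exp ((C N : ℝ) * (c*s)) := by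
        have hbase : 1 + c*s ≤ Real.exp (c*s) := by
          have := Real.add_one_le_exp (c*s)
          linarith
        calc (1+c*s)^(C N) ≤ (Real.exp (c*s))^(C N) :=
              pow_le_pow_left₀ (by positivity) hbase _
          _ = Real.exp ((C N : ℝ) * (c*s)) := by rw [← Real.exp_nat_mul]
      have e3 : (1-s)^(N - C N) * (1+c*s)^(C N)
          ≤ Real.exp (((N:ℝ) - C N) * (-s - s^2/2) + (C N : ℝ) * (c*s)) := by
        rw [Real.exp_add]
        have h1' : (0:ℝ) ≤ (1-s)^(N - C N) := by
          have : (0:ℝ) ≤ 1 - s := by linarith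
          positivity
        exact mul_le_mul e1 e2 (by positivity) (Real.exp_nonneg _)
      -- exponent bound
      have e4 : ((N:ℝ) - C N) * (-s - s^2/2) + (C N : ℝ) * (c*s)
          ≤ ((|δ|+1)/ν)*t - ((1-ν)/4)*t^2 := by
        have key1 : ((N:ℝ) - C N) * (-s - s^2/2) + (C N : ℝ) * (c*s)
            = s * (((C N : ℝ) - ν*N) * ν⁻¹) - ((N:ℝ) - C N) * s^2/2 := by
          have k5 : ν * ν⁻¹ = 1 := mul_inv_cancel₀ hν0.ne'
          linear_combination (s * (C N : ℝ) * ν⁻¹) * hcinv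
            + (s * (C N :ℝ) * (1 + c) - s * (C N : ℝ) - s * (N:ℝ)) * k5
            + (t * (Real.sqrt N)⁻¹ * (2*(N:ℝ) + (C N:ℝ)*(2*ν*ν⁻¹ - 1 - 2*ν⁻¹))) * k5
        rw [key1]
        have bnd1 : s * (((C N : ℝ) - ν*N) * ν⁻¹) ≤ ((|δ|+1)/ν)*t := by
          have h4 : s * ((C N : ℝ) - ν*N) ≤ s * ((|δ|+1) * Real.sqrt N) :=
            mul_le_mul_of_nonneg_left h1 hs0.le
          have h5 : s * ((|δ|+1) * Real.sqrt N) = (|δ|+1) * t := by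
            rw [← k1]; ring
          calc s * (((C N : ℝ) - ν*N) * ν⁻¹) = (s * ((C N : ℝ) - ν*N)) * ν⁻¹ := by ring
            _ ≤ (s * ((|δ|+1) * Real.sqrt N)) * ν⁻¹ :=
                mul_le_mul_of_nonneg_right h4 (by positivity)
            _ = ((|δ|+1)/ν)*t := by rw [h5]; ring
        have bnd2 : ((1-ν)/4)*t^2 ≤ ((N:ℝ) - C N) * s^2/2 := by
          have h6 : ((1-ν)/2) * (N:ℝ) ≤ (N:ℝ) - C N := by linarith
          have h7 : ((1-ν)/2) * (N:ℝ) * (s^2/2) ≤ ((N:ℝ) - C N) * (s^2/2) :=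
            mul_le_mul_of_nonneg_right h6 (by positivity)
          calc ((1-ν)/4)*t^2 = ((1-ν)/2) * (N:ℝ) * (s^2/2) := by
                rw [← k2]; ring
            _ ≤ ((N:ℝ) - C N) * (s^2/2) := h7
            _ = ((N:ℝ) - C N) * s^2/2 := by ring
        linarith
      -- conclude
      calc (1-s)^(N - C N) * (1+c*s)^(C N) * t^(α-1)
          ≤ Real.exp (((N:ℝ) - C N) * (-s - s^2/2) + (C N : ℝ) * (c*s)) * t^(α-1) :=
            mul_le_mul_of_nonneg_right e3 (Real.rpow_nonneg ht0.le _)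
        _ ≤ Real.exp (((|δ|+1)/ν)*t - ((1-ν)/4)*t^2) * t^(α-1) :=
            mul_le_mul_of_nonneg_right (Real.exp_le_exp.mpr e4) (Real.rpow_nonneg ht0.le _)
        _ = G t := rfl
  -- integrability of the bound
  have hGint : Integrable G (volume.restrict (Set.Ioi (0:ℝ))) :=
    integrable_G (by linarith : (0:ℝ) < (1-ν)/4) hα
  -- pointwise convergence
  have h_lim : ∀ᵐ t ∂(volume.restrict (Set.Ioi (0:ℝ))),
      Tendsto (fun N : ℕ => F N t) atTop (𝓝 (f t)) := by
    filter_upwards [ae_restrict_mem measurableSet_Ioi] with t ht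
    have ht0 : (0:ℝ) < t := ht
    have key := key_tendsto ν δ t hν0 hν1 ht0 (fun N => (C N : ℝ)) hd
    have hcomp : Tendsto (fun N : ℕ => Real.exp (((N:ℝ) - C N) * Real.log (1 - t/Real.sqrt N)
        + (C N : ℝ) * Real.log (1 + c*(t/Real.sqrt N))) * t^(α-1)) atTop (𝓝 (f t)) := by
      rw [hf]
      exact (Real.continuous_exp.continuousAt.tendsto.comp key).mul_const _
    refine hcomp.congr' ?_
    filter_upwards [hb2, eventually_ge_atTop 1, sqrt_tendsto_atTop.eventually_gt_atTop t]
      with N ⟨h2, h2'⟩ h3 h4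
    have hN0 : (0:ℝ) < N := by exact_mod_cast h3
    have hsq : (0:ℝ) < Real.sqrt N := Real.sqrt_pos.mpr hN0
    have hmem : t ∈ Set.Ioo (0:ℝ) (Real.sqrt N) := ⟨ht0, h4⟩
    have hs1 : t / Real.sqrt N < 1 := (div_lt_one hsq).mpr h4
    have hs0 : 0 < t / Real.sqrt N := div_pos ht0 hsq
    have hn1 : ((N - C N : ℕ) : ℝ) = (N:ℝ) - C N := Nat.cast_sub h2'
    rw [hF]
    simp only [Set.indicator_of_mem hmem]
    rw [Real.exp_add]
    congr 2
    · rw [← hn1, Real.exp_nat_mul, Real.exp_log (by linarith : (0:ℝ) < 1 - t/Real.sqrt N)]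
    · rw [Real.exp_nat_mul, Real.exp_log (by positivity : (0:ℝ) < 1 + c*(t/Real.sqrt N))]
  -- dominated convergence
  have hDCT := MeasureTheory.tendsto_integral_filter_of_dominated_convergence
    (μ := volume.restrict (Set.Ioi (0:ℝ))) (F := F) (f := f) G
    (Eventually.of_forall hF_meas) h_bound hGint h_lim
  -- identify the prelimit
  refine hDCT.congr' ?_
  filter_upwards [hb2, eventually_ge_atTop 1] with N ⟨h2, h2'⟩ h3
  have hN0 : (0:ℝ) < N := by exact_mod_cast h3
  have hsq : (0:ℝ) < Real.sqrt N := Real.sqrt_pos.mpr hN0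
  have hsub := sub_lemma (N - C N) (C N) c α (Real.sqrt N) hsq
  rw [eq_comm]
  rw [hsub]
  have hpow : (Real.sqrt N)⁻¹ * ((Real.sqrt N)⁻¹)^(α-1) = ((N:ℝ)^(α/2))⁻¹ := by
    have h5 : (Real.sqrt N)⁻¹ * ((Real.sqrt N)⁻¹)^(α-1) = ((Real.sqrt N)⁻¹)^α := by
      nth_rewrite 1 [← Real.rpow_one (Real.sqrt N)⁻¹]
      rw [← Real.rpow_add (inv_pos.mpr hsq)]
      ring_nf
    rw [h5, Real.inv_rpow hsq.le, Real.sqrt_eq_rpow,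
      ← Real.rpow_mul (Nat.cast_nonneg N), show (1:ℝ)/2*α = α/2 by ring]
  rw [← mul_assoc, ← mul_assoc, mul_assoc ((N:ℝ)^(α/2)), hpow,
    mul_inv_cancel₀ (Real.rpow_pos_of_pos hN0 _).ne', one_mul]
end Aux

open Set in
lemma partA (α : ℝ) (hα : 0 < α) :
    Tendsto (fun N : ℕ => (N:ℝ)^α * ∫ u in Set.Ioo (0:ℝ) 1, (1-u)^N * u^(α-1)) atTop
      (𝓝 (Real.Gamma α)) := by
  have h := Real.GammaSeq_tendsto_Gamma α
  refine h.congr fun N => ?_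
  rw [A_eq α hα N, Real.GammaSeq, mul_div_assoc]

open Set in
lemma I_pos (ν δ α : ℝ) (hν0 : 0 < ν) (hν1 : ν < 1) (hα : 0 < α) :
    0 < ∫ u in Set.Ioi (0:ℝ), Real.exp (δ*u/ν - (1-ν)*u^2/(2*ν)) * u^(α-1) := by
  have hfeq : (fun u:ℝ => Real.exp (δ*u/ν - (1-ν)*u^2/(2*ν)) * u^(α-1))
      = (fun u:ℝ => Real.exp ((δ/ν)*u - ((1-ν)/(2*ν))*u^2) * u^(α-1)) := by
    funext u
    congr 2
    ring
  have hInt : Integrable (fun u:ℝ => Real.exp (δ*u/ν - (1-ν)*u^2/(2*ν)) * u^(α-1))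
      (volume.restrict (Set.Ioi (0:ℝ))) := by
    rw [hfeq]
    exact integrable_G (div_pos (by linarith) (by linarith) : (0:ℝ) < (1-ν)/(2*ν)) hα
  have hnonneg : 0 ≤ᵐ[volume.restrict (Set.Ioi (0:ℝ))]
      (fun u:ℝ => Real.exp (δ*u/ν - (1-ν)*u^2/(2*ν)) * u^(α-1)) := by
    filter_upwards [ae_restrict_mem measurableSet_Ioi] with u hu
    have : (0:ℝ) < u := hu
    positivity
  rw [MeasureTheory.integral_pos_iff_support_of_nonneg_ae hnonneg hInt]
  have hsub : Set.Ioi (0:ℝ) ⊆ Function.support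
      (fun u:ℝ => Real.exp (δ*u/ν - (1-ν)*u^2/(2*ν)) * u^(α-1)) := by
    intro u hu
    have hu0 : (0:ℝ) < u := hu
    have : (0:ℝ) < Real.exp (δ*u/ν - (1-ν)*u^2/(2*ν)) * u^(α-1) := by positivity
    exact ne_of_gt this
  have h1 : (volume.restrict (Set.Ioi (0:ℝ))) (Set.Ioi (0:ℝ))
      ≤ (volume.restrict (Set.Ioi (0:ℝ))) (Function.support _) := measure_mono hsub
  have h2 : (volume.restrict (Set.Ioi (0:ℝ))) (Set.Ioi (0:ℝ)) = ⊤ := by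
    rw [Measure.restrict_apply' measurableSet_Ioi, Set.inter_self, Real.volume_Ioi]
  refine lt_of_lt_of_le ?_ h1
  rw [h2]
  exact ENNReal.zero_lt_top

/-- Critical regime (Proposition 10): convergence of the Laplace transform
`E_0(e^{-α[T_{C_N} - (log N)/2]})`, i.e. `N^{α/2}` times the ratio of integrals,
to `Γ(α)/∫₀^∞ exp(δu/ν - (1-ν)u²/(2ν)) u^{α-1} du`. -/
theorem critical_boundary_hitting_laplace_limit
    (ν μ δ α : ℝ) (hν : ν ∈ Set.Ioo (0:ℝ) 1) (hμ : μ = 1 - ν) (hα : 0 < α)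
    (C : ℕ → ℕ)
    (hC : (fun N : ℕ => (C N : ℝ) - ν * N - δ * Real.sqrt N)
        =o[atTop] fun N : ℕ => Real.sqrt N) :
    Tendsto (fun N : ℕ =>
        (N : ℝ) ^ (α / 2) *
          ((∫ u in Set.Ioo (0:ℝ) 1, (1 - u) ^ N * u ^ (α - 1)) /
           (∫ u in Set.Ioo (0:ℝ) 1,
              (1 - u) ^ (N - C N) * (1 + (μ / ν) * u) ^ (C N) * u ^ (α - 1))))
      atTop
      (𝓝 (Real.Gamma α /
        ∫ u in Set.Ioi (0:ℝ),
          Real.exp (δ * u / ν - (1 - ν) * u ^ 2 / (2 * ν)) * u ^ (α - 1))) := by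
  obtain ⟨hν0, hν1⟩ := hν
  subst hμ
  -- derive the normalized tendsto from the little-o hypothesis
  have h0 : Tendsto (fun N : ℕ => ((C N : ℝ) - ν*N - δ*Real.sqrt N)/Real.sqrt N) atTop
      (𝓝 0) := hC.tendsto_div_nhds_zero
  have hd : Tendsto (fun N : ℕ => ((C N : ℝ) - ν*N)/Real.sqrt N) atTop (𝓝 δ) := by
    have h1 : Tendsto (fun N : ℕ => ((C N : ℝ) - ν*N - δ*Real.sqrt N)/Real.sqrt N + δ) atTop
        (𝓝 (0 + δ)) := h0.add tendsto_const_nhds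
    rw [zero_add] at h1
    refine h1.congr' ?_
    filter_upwards [eventually_ge_atTop 1] with N hN
    have hN0 : (0:ℝ) < N := by exact_mod_cast hN
    have hsq : (0:ℝ) < Real.sqrt N := Real.sqrt_pos.mpr hN0
    field_simp
    ring
  have hA := partA α hα
  have hB := partB ν δ α hν0 hν1 hα C hd
  have hI := I_pos ν δ α hν0 hν1 hα
  have hdiv := hA.div hB hI.ne'
  refine hdiv.congr' ?_
  filter_upwards [eventually_ge_atTop 1] with N hN
  have hN0 : (0:ℝ) < N := by exact_mod_cast hN
  have hpow : (N:ℝ)^α = (N:ℝ)^(α/2) * (N:ℝ)^(α/2) := by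
    rw [← Real.rpow_add hN0, add_halves]
  have hP : (0:ℝ) < (N:ℝ)^(α/2) := Real.rpow_pos_of_pos hN0 _
  set A := ∫ u in Set.Ioo (0:ℝ) 1, (1 - u) ^ N * u ^ (α - 1)
  set B := ∫ u in Set.Ioo (0:ℝ) 1,
      (1 - u) ^ (N - C N) * (1 + ((1-ν) / ν) * u) ^ (C N) * u ^ (α - 1)
  calc ((N:ℝ)^α * A)/((N:ℝ)^(α/2) * B)
      = ((N:ℝ)^(α/2) * ((N:ℝ)^(α/2) * A))/((N:ℝ)^(α/2) * B) := by rw [hpow, mul_assoc]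
    _ = ((N:ℝ)^(α/2) * A)/B := mul_div_mul_left _ _ hP.ne'
    _ = (N:ℝ)^(α/2) * (A/B) := mul_div_assoc _ _ _
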